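/- arXiv:0803.3981 — 2 statements merged into one kernel-verified Lean document; each statement's English description precedes it below -/
import Mathlib

section
/- Let (Ω, μ) be a sigma-finite measure space, and suppose {f_n}_{n=1}^∞ is a sequence of complex-valued μ-measurable functions on Ω with the following property: there is a positive real constant Θ such that for every positive integer J ≥ 2 and every sequence of positive integers u₁ < u₂ < ⋯ < u_J, one has ‖ { Σ_{j=1}^{J-1} sup_{n ∈ ℕ, u_j ≤ n < u_{j+1}} |f_n − f_{u_{j+1}}|² }^{1/2} ‖_{L^{1,∞}(μ)} ≤ Θ J^{1/4}. Then there exists a μ-measurable function f : Ω → ℂ such that {f_n}_{n=1}^∞ converges to f μ-a.e. on Ω. -/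
open MeasureTheory Filter
open scoped ENNReal

/-- The weak-`L¹` quasinorm `‖h‖_{L^{1,∞}(ν)} = sup_{y>0} y · ν{|h| > y}`. -/
noncomputable def weakL1Norm {X : Type*} [MeasurableSpace X] (ν : Measure X) (h : X → ℝ) :
    ℝ≥0∞ :=
  ⨆ (y : ℝ) (_ : 0 < y), ENNReal.ofReal y * ν {x | y < |h x|}

private lemma geom_sum_aux (δ : ℝ≥0∞) : ∀ n : ℕ,
    (∑ j ∈ Finset.range n, δ / 2 ^ (j + 2)) + δ / 2 ^ (n + 1) = δ / 2 := by
  intro n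
  induction n with
  | zero => simp
  | succ n ih =>
    rw [Finset.sum_range_succ, add_assoc, ENNReal.div_add_div_same, ← two_mul,
      pow_succ (2 : ℝ≥0∞) (n + 1), mul_comm ((2:ℝ≥0∞) ^ (n+1)) 2,
      ENNReal.mul_div_mul_left _ _ two_ne_zero ENNReal.ofNat_ne_top, ih]

/-- Main auxiliary lemma: the set where the sequence oscillates by more than `ε`
infinitely often is null. -/
private lemma osc_set_null
    {Ω : Type*} [MeasurableSpace Ω] (μ : Measure Ω) [SigmaFinite μ]
    (f : ℕ → Ω → ℂ) (hmeas : ∀ n, Measurable (f n))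
    (Θ : ℝ) (hΘ : 0 < Θ)
    (hosc : ∀ J : ℕ, 2 ≤ J → ∀ u : ℕ → ℕ, 0 < u 0 →
      (∀ i j : ℕ, i < j → j < J → u i < u j) →
      weakL1Norm μ (fun x => Real.sqrt (∑ j ∈ Finset.range (J - 1),
          ⨆ n ∈ Set.Ico (u j) (u (j + 1)), ‖f n x - f (u (j + 1)) x‖ ^ 2))
        ≤ ENNReal.ofReal (Θ * (J : ℝ) ^ ((1 : ℝ) / 4)))
    (ε : ℝ) (hε : 0 < ε) :
    μ {x | ∀ N : ℕ, ∃ m, N ≤ m ∧ ε < ‖f m x - f N x‖} = 0 := by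
  set E : Set Ω := {x | ∀ N : ℕ, ∃ m, N ≤ m ∧ ε < ‖f m x - f N x‖} with hE
  have hA : ∀ m N : ℕ, Measurable fun x => ‖f m x - f N x‖ := by
    intro m N
    simpa using ((hmeas m).sub (hmeas N)).norm
  have hAm : ∀ m N : ℕ, MeasurableSet {x | ε < ‖f m x - f N x‖} :=
    fun m N => measurableSet_lt measurable_const (hA m N)
  have hEmeas : MeasurableSet E := by
    have : E = ⋂ N : ℕ, ⋃ m : ℕ, ⋃ (_ : N ≤ m), {x | ε < ‖f m x - f N x‖} := by
      ext x; simp [hE]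
    rw [this]
    exact MeasurableSet.iInter fun N => MeasurableSet.iUnion fun m =>
      MeasurableSet.iUnion fun _ => hAm m N
  by_contra hne
  -- find a finite-measure piece of positive measure
  obtain ⟨n₀, hn₀⟩ : ∃ n, μ (E ∩ spanningSets μ n) ≠ 0 := by
    by_contra h
    push_neg at h
    apply hne
    have : E = ⋃ n, E ∩ spanningSets μ n := by
      rw [← Set.inter_iUnion, iUnion_spanningSets, Set.inter_univ]
    rw [this]
    exact measure_iUnion_null_iff.2 h
  set S : Set Ω := spanningSets μ n₀ with hS
  have hSmeas : MeasurableSet S := measurableSet_spanningSets μ n₀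
  set δ : ℝ≥0∞ := μ (E ∩ S) with hδ
  have hδ0 : δ ≠ 0 := hn₀
  have hδtop : δ < ∞ :=
    lt_of_le_of_lt (measure_mono Set.inter_subset_right) (measure_spanningSets_lt_top μ n₀)
  -- the "good" sets
  set G : ℕ → ℕ → Set Ω :=
    fun N M => {x | ∃ m, N ≤ m ∧ m ≤ M ∧ ε < ‖f m x - f N x‖} with hG
  have hGmeas : ∀ N M, MeasurableSet (G N M) := by
    intro N M
    have : G N M = ⋃ m : ℕ, ⋃ (_ : N ≤ m ∧ m ≤ M), {x | ε < ‖f m x - f N x‖} := by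
      ext x; simp [hG]; tauto
    rw [this]
    exact MeasurableSet.iUnion fun m => MeasurableSet.iUnion fun _ => hAm m N
  -- exhaustion : key choice step
  have key : ∀ N : ℕ, ∀ η : ℝ≥0∞, 0 < η →
      ∃ M, N < M ∧ μ ((E ∩ S) \ G N M) ≤ η := by
    intro N η hη
    have hanti : Antitone fun M => (E ∩ S) \ G N M := by
      intro M₁ M₂ hM
      apply Set.diff_subset_diff_right
      rintro x ⟨m, hm1, hm2, hm3⟩
      exact ⟨m, hm1, hm2.trans hM, hm3⟩
    have hint : (⋂ M, ((E ∩ S) \ G N M)) = ∅ := by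
      rw [Set.eq_empty_iff_forall_notMem]
      intro x hx
      have hx0 := Set.mem_iInter.1 hx 0
      obtain ⟨m, hm1, hm2⟩ := hx0.1.1 N
      exact (Set.mem_iInter.1 hx m).2 ⟨m, hm1, le_rfl, hm2⟩
    have htend := tendsto_measure_iInter_atTop
      (fun M => ((hEmeas.inter hSmeas).diff (hGmeas N M)).nullMeasurableSet) hanti
      ⟨0, (lt_of_le_of_lt (measure_mono (Set.diff_subset.trans Set.inter_subset_right))
        (measure_spanningSets_lt_top μ n₀)).ne⟩
    rw [hint, measure_empty] at htend
    have hev := (htend.eventually_lt_const hη).and (eventually_gt_atTop N)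
    obtain ⟨M, hM1, hM2⟩ := hev.exists
    exact ⟨M, hM2, hM1.le⟩
  choose g hg1 hg2 using key
  have hhalf : ∀ j : ℕ, (0 : ℝ≥0∞) < δ / 2 ^ (j + 2) :=
    fun j => ENNReal.div_pos hδ0 (ENNReal.pow_ne_top ENNReal.ofNat_ne_top)
  -- the sequence u
  set u : ℕ → ℕ := fun n => Nat.rec 1 (fun j uj => g uj (δ / 2 ^ (j + 2)) (hhalf j)) n with hu
  have hu0 : u 0 = 1 := rfl
  have huS : ∀ j, u (j + 1) = g (u j) (δ / 2 ^ (j + 2)) (hhalf j) := fun j => rfl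
  have humono : StrictMono u := by
    apply strictMono_nat_of_lt_succ
    intro j
    rw [huS j]
    exact hg1 _ _ _
  have hbad : ∀ j, μ ((E ∩ S) \ G (u j) (u (j + 1))) ≤ δ / 2 ^ (j + 2) := by
    intro j
    rw [huS j]
    exact hg2 _ _ _
  -- main estimate for any J = M^4, M ≥ 2
  have main : ∀ M : ℕ, 2 ≤ M → ∀ d : ℝ, (δ / 2).toReal = d →
      ε / 4 * Real.sqrt ((M ^ 4 : ℕ) - 1 : ℝ) * d ≤ Θ * ((M ^ 4 : ℕ) : ℝ) ^ ((1 : ℝ) / 4) := by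
    intro M hM d hd
    set J : ℕ := M ^ 4 with hJ
    have hJ2 : 2 ≤ J := le_trans (by norm_num) (Nat.pow_le_pow_left hM 4)
    have hJR : (2 : ℝ) ≤ (J : ℝ) := by exact_mod_cast hJ2
    set y : ℝ := ε / 4 * Real.sqrt ((J : ℝ) - 1) with hy
    have hsqrtpos : 0 < Real.sqrt ((J : ℝ) - 1) := Real.sqrt_pos.2 (by linarith)
    have hypos : 0 < y := mul_pos (by linarith) hsqrtpos
    -- the exceptional set
    set E' : Set Ω := (E ∩ S) \ ⋃ j ∈ Finset.range (J - 1), ((E ∩ S) \ G (u j) (u (j + 1)))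
      with hE'
    have hE'meas : δ / 2 ≤ μ E' := by
      have hsub : E ∩ S ⊆ E' ∪ ⋃ j ∈ Finset.range (J - 1), ((E ∩ S) \ G (u j) (u (j + 1))) := by
        intro x hx
        by_cases hxx : x ∈ ⋃ j ∈ Finset.range (J - 1), ((E ∩ S) \ G (u j) (u (j + 1)))
        · exact Or.inr hxx
        · exact Or.inl ⟨hx, hxx⟩
      have h1 : δ ≤ μ E' + δ / 2 := by
        calc δ ≤ μ (E' ∪ ⋃ j ∈ Finset.range (J - 1), ((E ∩ S) \ G (u j) (u (j + 1)))) :=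
              measure_mono hsub
          _ ≤ μ E' + μ (⋃ j ∈ Finset.range (J - 1), ((E ∩ S) \ G (u j) (u (j + 1)))) :=
              measure_union_le _ _
          _ ≤ μ E' + ∑ j ∈ Finset.range (J - 1), μ ((E ∩ S) \ G (u j) (u (j + 1))) := by
              gcongr
              exact measure_biUnion_finset_le _ _
          _ ≤ μ E' + ∑ j ∈ Finset.range (J - 1), δ / 2 ^ (j + 2) := by
              gcongr with j hj
              exact hbad j
          _ ≤ μ E' + δ / 2 := by
              gcongr
              calc (∑ j ∈ Finset.range (J - 1), δ / 2 ^ (j + 2))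
                  ≤ (∑ j ∈ Finset.range (J - 1), δ / 2 ^ (j + 2)) + δ / 2 ^ (J - 1 + 1) :=
                    le_self_add
                _ = δ / 2 := geom_sum_aux δ (J - 1)
      have h2 : δ / 2 + δ / 2 ≤ μ E' + δ / 2 := by
        rwa [ENNReal.add_halves]
      exact (ENNReal.add_le_add_iff_right
        (ENNReal.div_lt_top hδtop.ne (by norm_num)).ne).1 h2
    -- pointwise lower bound on E'
    have hpt : ∀ x ∈ E', y < |Real.sqrt (∑ j ∈ Finset.range (J - 1),
        ⨆ n ∈ Set.Ico (u j) (u (j + 1)), ‖f n x - f (u (j + 1)) x‖ ^ 2)| := by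
      intro x hx
      obtain ⟨hxES, hxnot⟩ := hx
      have hxG : ∀ j ∈ Finset.range (J - 1), x ∈ G (u j) (u (j + 1)) := by
        intro j hj
        by_contra hcon
        exact hxnot (Set.mem_biUnion hj ⟨hxES, hcon⟩)
      -- each term is at least (ε/2)^2
      have hterm : ∀ j ∈ Finset.range (J - 1),
          (ε / 2) ^ 2 ≤ ⨆ n ∈ Set.Ico (u j) (u (j + 1)),
            ‖f n x - f (u (j + 1)) x‖ ^ 2 := by
        intro j hj
        obtain ⟨m, hm1, hm2, hm3⟩ := hxG j hj
        -- find a witness in the half-open block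
        have hwit : ∃ n, n ∈ Set.Ico (u j) (u (j + 1)) ∧
            ε / 2 < ‖f n x - f (u (j + 1)) x‖ := by
          by_cases hc : ε / 2 < ‖f (u j) x - f (u (j + 1)) x‖
          · exact ⟨u j, ⟨le_rfl, humono (Nat.lt_succ_self j)⟩, hc⟩
          · push_neg at hc
            have htri : ‖f m x - f (u j) x‖ ≤
                ‖f m x - f (u (j + 1)) x‖ +
                ‖f (u j) x - f (u (j + 1)) x‖ := by
              have := norm_sub_le_norm_sub_add_norm_sub (f m x) (f (u (j + 1)) x) (f (u j) x)
              have heq : ‖f (u (j + 1)) x - f (u j) x‖ =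
                  ‖f (u j) x - f (u (j + 1)) x‖ := norm_sub_rev _ _
              linarith [this, heq.le]
            have h4 : ε / 2 < ‖f m x - f (u (j + 1)) x‖ := by linarith
            have hmlt : m < u (j + 1) := by
              rcases lt_or_eq_of_le hm2 with h | h
              · exact h
              · exfalso
                rw [h, sub_self, norm_zero] at h4
                linarith
            exact ⟨m, ⟨hm1, hmlt⟩, h4⟩
        obtain ⟨n₁, hn₁, hn₁lt⟩ := hwit
        -- bound the iSup from below
        set gfun : ℕ → ℝ := fun n => ⨆ (_ : n ∈ Set.Ico (u j) (u (j + 1))),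
          ‖f n x - f (u (j + 1)) x‖ ^ 2 with hgfun
        have hC : ∀ n, gfun n ≤ ∑ i ∈ Finset.range (u (j + 1)),
            ‖f i x - f (u (j + 1)) x‖ ^ 2 := by
          intro n
          apply Real.iSup_le
          · intro hn
            exact Finset.single_le_sum (f := fun i => ‖f i x - f (u (j+1)) x‖ ^ 2)
              (fun i _ => sq_nonneg _) (Finset.mem_range.2 hn.2)
          · exact Finset.sum_nonneg fun i _ => sq_nonneg _
        have hbdd : BddAbove (Set.range gfun) := by
          refine ⟨∑ i ∈ Finset.range (u (j + 1)), ‖f i x - f (u (j + 1)) x‖ ^ 2, ?_⟩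
          rintro _ ⟨n, rfl⟩
          exact hC n
        have h5 : (ε / 2) ^ 2 ≤ gfun n₁ := by
          rw [hgfun]
          simp only []
          rw [ciSup_pos hn₁]
          exact pow_le_pow_left₀ (by linarith) hn₁lt.le 2
        exact h5.trans (le_ciSup hbdd n₁)
      -- sum the terms
      have hsum : ((J : ℝ) - 1) * (ε / 2) ^ 2 ≤ ∑ j ∈ Finset.range (J - 1),
          ⨆ n ∈ Set.Ico (u j) (u (j + 1)), ‖f n x - f (u (j + 1)) x‖ ^ 2 := by
        have := Finset.sum_le_sum hterm
        rw [Finset.sum_const, Finset.card_range, nsmul_eq_mul] at this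
        have hcast : ((J - 1 : ℕ) : ℝ) = (J : ℝ) - 1 := by
          have : (1 : ℕ) ≤ J := le_trans (by norm_num) hJ2
          push_cast [Nat.cast_sub this]
          ring
        rwa [hcast] at this
      have hsqrt : Real.sqrt ((J : ℝ) - 1) * (ε / 2) ≤ Real.sqrt (∑ j ∈ Finset.range (J - 1),
          ⨆ n ∈ Set.Ico (u j) (u (j + 1)), ‖f n x - f (u (j + 1)) x‖ ^ 2) := by
        have h6 : Real.sqrt (((J : ℝ) - 1) * (ε / 2) ^ 2) ≤ _ := Real.sqrt_le_sqrt hsum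
        rwa [Real.sqrt_mul (by linarith), Real.sqrt_sq (by linarith)] at h6
      have habs : |Real.sqrt (∑ j ∈ Finset.range (J - 1),
          ⨆ n ∈ Set.Ico (u j) (u (j + 1)), ‖f n x - f (u (j + 1)) x‖ ^ 2)| =
          Real.sqrt (∑ j ∈ Finset.range (J - 1),
          ⨆ n ∈ Set.Ico (u j) (u (j + 1)), ‖f n x - f (u (j + 1)) x‖ ^ 2) :=
        abs_of_nonneg (Real.sqrt_nonneg _)
      rw [habs]
      calc y = ε / 4 * Real.sqrt ((J : ℝ) - 1) := rfl
        _ < ε / 2 * Real.sqrt ((J : ℝ) - 1) := by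
            apply mul_lt_mul_of_pos_right (by linarith) hsqrtpos
        _ = Real.sqrt ((J : ℝ) - 1) * (ε / 2) := by ring
        _ ≤ _ := hsqrt
    -- weak L1 lower bound
    have hsubset : E' ⊆ {x | y < |Real.sqrt (∑ j ∈ Finset.range (J - 1),
        ⨆ n ∈ Set.Ico (u j) (u (j + 1)), ‖f n x - f (u (j + 1)) x‖ ^ 2)|} :=
      fun x hx => hpt x hx
    have hweak : ENNReal.ofReal y * (δ / 2) ≤
        ENNReal.ofReal (Θ * (J : ℝ) ^ ((1 : ℝ) / 4)) := by
      calc ENNReal.ofReal y * (δ / 2)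
          ≤ ENNReal.ofReal y * μ {x | y < |Real.sqrt (∑ j ∈ Finset.range (J - 1),
              ⨆ n ∈ Set.Ico (u j) (u (j + 1)), ‖f n x - f (u (j + 1)) x‖ ^ 2)|} := by
            gcongr
            exact hE'meas.trans (measure_mono hsubset)
        _ ≤ weakL1Norm μ (fun x => Real.sqrt (∑ j ∈ Finset.range (J - 1),
              ⨆ n ∈ Set.Ico (u j) (u (j + 1)), ‖f n x - f (u (j + 1)) x‖ ^ 2)) :=
            le_iSup_of_le y (le_iSup_of_le hypos le_rfl)
        _ ≤ ENNReal.ofReal (Θ * (J : ℝ) ^ ((1 : ℝ) / 4)) :=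
            hosc J hJ2 u (hu0 ▸ Nat.one_pos) (fun i j hij _ => humono hij)
    -- convert to reals
    have hδ2top : δ / 2 ≠ ∞ := (ENNReal.div_lt_top hδtop.ne (by norm_num)).ne
    have hδ2 : δ / 2 = ENNReal.ofReal d := by
      rw [← hd, ENNReal.ofReal_toReal hδ2top]
    rw [hδ2, ← ENNReal.ofReal_mul hypos.le] at hweak
    exact (ENNReal.ofReal_le_ofReal_iff
      (mul_nonneg hΘ.le (Real.rpow_nonneg (Nat.cast_nonneg J) _))).1 hweak
  -- derive the contradiction for large M
  obtain ⟨d, hd⟩ : ∃ d : ℝ, (δ / 2).toReal = d := ⟨_, rfl⟩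
  have hdpos : 0 < d := by
    rw [← hd]
    exact ENNReal.toReal_pos
      (by
        simp only [ne_eq, ENNReal.div_eq_zero_iff]
        push_neg
        exact ⟨hδ0, by norm_num⟩)
      (ENNReal.div_lt_top hδtop.ne (by norm_num)).ne
  obtain ⟨M, hM2, hMbig⟩ : ∃ M : ℕ, 2 ≤ M ∧ 8 * Θ / (ε * d) < (M : ℝ) := by
    refine ⟨⌈8 * Θ / (ε * d)⌉₊ + 2, le_add_self, ?_⟩
    calc 8 * Θ / (ε * d) ≤ (⌈8 * Θ / (ε * d)⌉₊ : ℝ) := Nat.le_ceil _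
      _ < _ := by push_cast; linarith
  have hMR : (2 : ℝ) ≤ (M : ℝ) := by exact_mod_cast hM2
  have hineq := main M hM2 d hd
  -- compute (M^4)^(1/4) = M
  have hJ4 : (((M ^ 4 : ℕ) : ℝ)) ^ ((1 : ℝ) / 4) = (M : ℝ) := by
    have h1 : ((M ^ 4 : ℕ) : ℝ) = (M : ℝ) ^ (4 : ℕ) := by push_cast; ring
    rw [h1, ← Real.rpow_natCast (M : ℝ) 4, ← Real.rpow_mul (Nat.cast_nonneg M)]
    norm_num
  rw [hJ4] at hineq
  -- lower bound sqrt(M^4 - 1) ≥ M^2/2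
  have hsq : (M : ℝ) ^ 2 / 2 ≤ Real.sqrt (((M ^ 4 : ℕ) : ℝ) - 1) := by
    have h1 : ((M : ℝ) ^ 2 / 2) ^ 2 ≤ ((M ^ 4 : ℕ) : ℝ) - 1 := by
      have hc4 : ((M ^ 4 : ℕ) : ℝ) = (M : ℝ) ^ 4 := by push_cast; ring
      rw [hc4]
      have h4 : (4:ℝ) ≤ (M : ℝ) ^ 2 := by nlinarith
      have h16 : (16:ℝ) ≤ (M : ℝ) ^ 4 := by nlinarith
      have hexp : ((M:ℝ) ^ 2 / 2) ^ 2 = (M:ℝ) ^ 4 / 4 := by ring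
      rw [hexp]
      linarith
    calc (M : ℝ) ^ 2 / 2 = Real.sqrt (((M : ℝ) ^ 2 / 2) ^ 2) :=
          (Real.sqrt_sq (by positivity)).symm
      _ ≤ _ := Real.sqrt_le_sqrt h1
  -- final contradiction
  have hfinal : Θ * (M : ℝ) < ε / 4 * Real.sqrt (((M ^ 4 : ℕ) : ℝ) - 1) * d := by
    have h2 : ε / 4 * ((M : ℝ) ^ 2 / 2) * d ≤ ε / 4 * Real.sqrt (((M ^ 4 : ℕ) : ℝ) - 1) * d := by
      have := mul_le_mul_of_nonneg_right
        (mul_le_mul_of_nonneg_left hsq (by linarith : (0:ℝ) ≤ ε / 4)) hdpos.le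
      linarith
    have h3 : Θ * (M : ℝ) < ε / 4 * ((M : ℝ) ^ 2 / 2) * d := by
      have h4 : 8 * Θ < ε * d * (M : ℝ) := by
        rw [div_lt_iff₀ (by positivity)] at hMbig
        linarith
      nlinarith [hMR, hdpos, hε]
    linarith
  linarith

/-- **Berkson–Demeter, Lemma (oscillation criterion for a.e. convergence).**
Let `(Ω, μ)` be a sigma-finite measure space and `{f_n}` a sequence of complex-valued
μ-measurable functions on `Ω` such that for some constant `Θ > 0`: for every integer
`J ≥ 2` and all positive integers `u₁ < u₂ < ⋯ < u_J`,
`‖ (∑_{j=1}^{J-1} sup_{u_j ≤ n < u_{j+1}} |f_n − f_{u_{j+1}}|²)^{1/2} ‖_{L^{1,∞}(μ)}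
  ≤ Θ · J^{1/4}`.
Then there is a μ-measurable `f : Ω → ℂ` with `f_n → f` μ-a.e. on `Ω`. -/
theorem ae_convergence_from_oscillation
    {Ω : Type*} [MeasurableSpace Ω] (μ : Measure Ω) [SigmaFinite μ]
    (f : ℕ → Ω → ℂ) (hmeas : ∀ n, Measurable (f n))
    (Θ : ℝ) (hΘ : 0 < Θ)
    (hosc : ∀ J : ℕ, 2 ≤ J → ∀ u : ℕ → ℕ, 0 < u 0 →
      (∀ i j : ℕ, i < j → j < J → u i < u j) →
      weakL1Norm μ (fun x => Real.sqrt (∑ j ∈ Finset.range (J - 1),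
          ⨆ n ∈ Set.Ico (u j) (u (j + 1)), ‖f n x - f (u (j + 1)) x‖ ^ 2))
        ≤ ENNReal.ofReal (Θ * (J : ℝ) ^ ((1 : ℝ) / 4))) :
    ∃ F : Ω → ℂ, Measurable F ∧
      ∀ᵐ x ∂μ, Tendsto (fun n => f n x) atTop (nhds (F x)) := by
  have hnull : μ (⋃ k : ℕ, {x | ∀ N : ℕ, ∃ m, N ≤ m ∧
      1 / ((k : ℝ) + 1) < ‖f m x - f N x‖}) = 0 :=
    measure_iUnion_null fun k =>
      osc_set_null μ f hmeas Θ hΘ hosc (1 / ((k : ℝ) + 1)) (by positivity)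
  have hae : ∀ᵐ x ∂μ, ∃ l : ℂ, Tendsto (fun n => f n x) atTop (nhds l) := by
    have hco : ∀ᵐ x ∂μ, x ∉ ⋃ k : ℕ, {x | ∀ N : ℕ, ∃ m, N ≤ m ∧
        1 / ((k : ℝ) + 1) < ‖f m x - f N x‖} :=
      compl_mem_ae_iff.2 hnull
    filter_upwards [hco] with x hx
    apply cauchySeq_tendsto_of_complete
    rw [Metric.cauchySeq_iff']
    intro ε' hε'
    obtain ⟨k, hk⟩ := exists_nat_one_div_lt hε'
    have hxk : x ∉ {x | ∀ N : ℕ, ∃ m, N ≤ m ∧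
        1 / ((k : ℝ) + 1) < ‖f m x - f N x‖} := by
      intro hmem
      exact hx (Set.mem_iUnion.2 ⟨k, hmem⟩)
    simp only [Set.mem_setOf_eq, not_forall, not_exists, not_and, not_lt] at hxk
    obtain ⟨N, hN⟩ := hxk
    refine ⟨N, fun n hn => ?_⟩
    have := hN n hn
    rw [Complex.dist_eq]
    calc ‖f n x - f N x‖ ≤ 1 / ((k : ℝ) + 1) := this
      _ < ε' := hk
  exact measurable_limit_of_tendsto_metrizable_ae (fun n => (hmeas n).aemeasurable) hae
end

section
/- Let N ∈ ℕ and suppose {F_j}_{j=1}^N ⊆ L¹(ℝ) is such that for 1 ≤ j ≤ N and each n ∈ ℤ, the restriction F_j|ℐ_n belongs to C¹(ℐ_n). For each n ∈ ℤ let Λ_n = sup{ |(F_j|ℐ_n)′(x)| : 1 ≤ j ≤ N, x ∈ ℐ_n }, and assume Λ ≡ {Λ_n}_{n∈ℤ} ∈ ℓ¹(ℤ). Define S^{(N)}(f,g)(x) = sup_{1≤j≤N} | ∫_ℝ f(x+y) g(x−y) F_j(y) dy | for f, g ∈ L²(ℝ) and x ∈ ℝ, and 𝔖^{(N)}(𝔞,𝔟)(m)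 = sup_{1≤j≤N} | Σ_{n∈ℤ} 𝔞_{m+n} 𝔟_{m−n} F_j(n) | for 𝔞, 𝔟 ∈ ℓ²(ℤ) and m ∈ ℤ. Let φ₀(u) = 2(1/4 − |u|)·χ_ℐ(u) and φ₁(u) = (1/4 − |u|)²·χ_ℐ(u) for u ∈ ℝ. Then for every pair a, b of finitely supported complex-valued sequences on ℤ, the inequality P_{φ₀}(𝔖^{(N)}(a,b)) ≤ S^{(N)}(Pa, Pb) + P_{φ₁}(𝔖_Λ(|a|,|b|)) holds pointwise on ℝ. -/
open MeasureTheory Filter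
open scoped ENNReal

set_option maxHeartbeats 2000000

/-- The map `P_φ` sending a sequence `{a_n}_{n∈ℤ}` to the function
`x ↦ ∑_{n∈ℤ} φ(x − n) • a_n` on `ℝ`. -/
noncomputable def Pmap {E : Type*} [NormedAddCommGroup E] [NormedSpace ℝ E]
    (φ : ℝ → ℝ) (a : ℤ → E) (x : ℝ) : E :=
  ∑' n : ℤ, φ (x - (n : ℝ)) • a n

/-- The characteristic function of the interval `ℐ = [-1/4, 1/4]`. -/
noncomputable def chiI : ℝ → ℝ :=
  (Set.Icc (-(1 / 4 : ℝ)) (1 / 4)).indicator fun _ => (1 : ℝ)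

/-- `φ₀(u) = 2(1/4 − |u|) χ_ℐ(u)`. -/
noncomputable def phi0 : ℝ → ℝ :=
  (Set.Icc (-(1 / 4 : ℝ)) (1 / 4)).indicator fun u => 2 * (1 / 4 - |u|)

/-- `φ₁(u) = (1/4 − |u|)² χ_ℐ(u)`. -/
noncomputable def phi1 : ℝ → ℝ :=
  (Set.Icc (-(1 / 4 : ℝ)) (1 / 4)).indicator fun u => (1 / 4 - |u|) ^ 2

lemma aux_pmap_single (φ : ℝ → ℝ) (hφ : ∀ u : ℝ, 1/4 ≤ |u| → φ u = 0) (f : ℤ → ℝ) (x : ℝ) :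
    Pmap φ f x = φ (x - round x) • f (round x) := by
  apply tsum_eq_single
  intro k hk
  have h1 : |x - (round x : ℤ)| ≤ 1/2 := abs_sub_round x
  have h2 : (1:ℝ) ≤ |(k:ℝ) - (round x : ℤ)| := by
    rw [show ((k:ℝ) - (round x : ℤ)) = ((k - round x : ℤ) : ℝ) by push_cast; ring]
    rw [← Int.cast_abs]
    exact_mod_cast Int.one_le_abs (sub_ne_zero.mpr hk)
  have h3 : |(k:ℝ) - (round x:ℤ)| ≤ |(k:ℝ) - x| + |x - (round x:ℤ)| := abs_sub_le _ _ _
  have : (1:ℝ)/4 ≤ |x - k| := by rw [abs_sub_comm]; linarith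
  rw [hφ _ this, zero_smul]

lemma phi0_vanish : ∀ u : ℝ, 1/4 ≤ |u| → phi0 u = 0 := by
  intro u hu
  rw [phi0, Set.indicator_apply]
  split
  · next h =>
    have h' : |u| ≤ 1/4 := abs_le.mpr (Set.mem_Icc.mp h)
    have : |u| = 1/4 := le_antisymm h' hu
    rw [this]; ring
  · rfl

lemma phi1_vanish : ∀ u : ℝ, 1/4 ≤ |u| → phi1 u = 0 := by
  intro u hu
  rw [phi1, Set.indicator_apply]
  split
  · next h =>
    have h' : |u| ≤ 1/4 := abs_le.mpr (Set.mem_Icc.mp h)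
    have : |u| = 1/4 := le_antisymm h' hu
    rw [this]; ring
  · rfl

lemma integral_abs_sub (c r : ℝ) (hr : 0 ≤ r) :
    ∫ s in Set.Icc (c - r) (c + r), |s - c| = r ^ 2 := by
  rw [MeasureTheory.integral_Icc_eq_integral_Ioc,
    ← intervalIntegral.integral_of_le (by linarith : c - r ≤ c + r)]
  rw [intervalIntegral.integral_comp_sub_right (fun u => |u|) c]
  rw [show c - r - c = -r by ring, show c + r - c = r by ring]
  have hi : ∀ p q : ℝ, IntervalIntegrable (fun u => |u|) volume p q := fun p q =>
    continuous_abs.intervalIntegrable p q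
  rw [← intervalIntegral.integral_add_adjacent_intervals (hi (-r) 0) (hi 0 r)]
  have e1 : (∫ u in (0:ℝ)..r, |u|) = r^2/2 := by
    rw [intervalIntegral.integral_congr (g := fun u => u) ?_, integral_id]
    · ring
    · intro u hu
      rw [Set.uIcc_of_le hr] at hu
      exact abs_of_nonneg hu.1
  have e2 : (∫ u in (-r)..(0:ℝ), |u|) = r^2/2 := by
    rw [intervalIntegral.integral_congr (g := fun u => -u) ?_]
    · rw [intervalIntegral.integral_neg, integral_id]; ring
    · intro u hu
      rw [Set.uIcc_of_le (by linarith : -r ≤ (0:ℝ))] at hu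
      exact abs_of_nonpos hu.2
  rw [e1, e2]; ring

lemma bddAbove_range_biSup (N : ℕ) (v : ℕ → ℝ) :
    BddAbove (Set.range fun j : ℕ => ⨆ _ : j ∈ Finset.range N, v j) := by
  have hsub : (Set.range fun j : ℕ => ⨆ _ : j ∈ Finset.range N, v j)
      ⊆ insert (0:ℝ) ((fun j => ⨆ _ : j ∈ Finset.range N, v j) '' Set.Iio N) := by
    rintro s ⟨j, rfl⟩
    show (⨆ _ : j ∈ Finset.range N, v j) ∈ _
    by_cases hj : j ∈ Finset.range N
    · exact Set.mem_insert_of_mem _ ⟨j, Finset.mem_range.mp hj, rfl⟩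
    · haveI : IsEmpty (j ∈ Finset.range N) := ⟨hj⟩
      rw [Real.iSup_of_isEmpty]
      exact Set.mem_insert _ _
  exact BddAbove.mono hsub (Set.Finite.bddAbove (((Set.finite_Iio N).image _).insert 0))

/-- **BBCG, Lemma 3 (discretization of maximal functions).**
Let `{F_j}_{j=1}^N ⊆ L¹(ℝ)` with each restriction `F_j|ℐ_n` of class `C¹` on
`ℐ_n = [n − 1/4, n + 1/4]`, let `Λ_n` be the supremum of `|(F_j|ℐ_n)′|` over `1 ≤ j ≤ N`
and `x ∈ ℐ_n`, and assume `Λ ∈ ℓ¹(ℤ)`.  Then for all finitely supported complex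
sequences `a, b` on `ℤ`, pointwise on `ℝ`:
`P_{φ₀}(𝔖^{(N)}(a,b)) ≤ S^{(N)}(Pa, Pb) + P_{φ₁}(𝔖_Λ(|a|,|b|))`. -/
theorem discretization_of_maximal_functions
    (N : ℕ) (hN : 0 < N) (F : ℕ → ℝ → ℝ)
    (hFL1 : ∀ j < N, Integrable (F j) volume)
    (hFC1 : ∀ j < N, ∀ n : ℤ,
      ContDiffOn ℝ 1 (F j) (Set.Icc ((n : ℝ) - 1 / 4) ((n : ℝ) + 1 / 4)))
    (Λ : ℤ → ℝ)
    (hΛ : ∀ n : ℤ, Λ n = sSup {r : ℝ | ∃ j < N, ∃ x ∈ Set.Icc ((n : ℝ) - 1 / 4) ((n : ℝ) + 1 / 4),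
      r = |derivWithin (F j) (Set.Icc ((n : ℝ) - 1 / 4) ((n : ℝ) + 1 / 4)) x|})
    (hΛl1 : Summable fun n : ℤ => |Λ n|)
    (a b : ℤ → ℂ) (ha : (Function.support a).Finite) (hb : (Function.support b).Finite) :
    ∀ x : ℝ,
      Pmap phi0 (fun k : ℤ => ⨆ j ∈ Finset.range N,
          Norm.norm (∑' n : ℤ, a (k + n) * b (k - n) * (F j (n : ℝ) : ℂ))) x
        ≤ (⨆ j ∈ Finset.range N,
            Norm.norm (∫ y : ℝ, Pmap chiI a (x + y) * Pmap chiI b (x - y) * (F j y : ℂ))) +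
          Pmap phi1 (fun n : ℤ => ∑' k : ℤ,
            Norm.norm (a (n + k)) * Norm.norm (b (n - k)) * Λ k) x := by
  classical
  -- facts about Λ
  have hbdd : ∀ n : ℤ, BddAbove {s : ℝ | ∃ j < N, ∃ y ∈ Set.Icc ((n : ℝ) - 1/4) ((n : ℝ) + 1/4),
      s = |derivWithin (F j) (Set.Icc ((n : ℝ) - 1/4) ((n : ℝ) + 1/4)) y|} := by
    intro n
    have hsub : {s : ℝ | ∃ j < N, ∃ y ∈ Set.Icc ((n : ℝ) - 1/4) ((n : ℝ) + 1/4),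
        s = |derivWithin (F j) (Set.Icc ((n : ℝ) - 1/4) ((n : ℝ) + 1/4)) y|}
        ⊆ ⋃ j ∈ Set.Iio N, (fun y => |derivWithin (F j)
            (Set.Icc ((n:ℝ) - 1/4) ((n:ℝ) + 1/4)) y|) '' Set.Icc ((n:ℝ) - 1/4) ((n:ℝ) + 1/4) := by
      rintro s ⟨j, hj, y, hy, rfl⟩
      exact Set.mem_biUnion hj ⟨y, hy, rfl⟩
    refine BddAbove.mono hsub ?_
    refine (Set.Finite.bddAbove_biUnion (Set.finite_Iio N)).mpr fun j hj => ?_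
    refine (isCompact_Icc.image_of_continuousOn ?_).bddAbove
    exact ((hFC1 j hj n).continuousOn_derivWithin (uniqueDiffOn_Icc (by linarith)) le_rfl).abs
  have hmem : ∀ n : ℤ, ∀ j < N, ∀ y ∈ Set.Icc ((n:ℝ) - 1/4) ((n:ℝ) + 1/4),
      |derivWithin (F j) (Set.Icc ((n:ℝ) - 1/4) ((n:ℝ) + 1/4)) y| ≤ Λ n := by
    intro n j hj y hy
    rw [hΛ n]
    exact le_csSup (hbdd n) ⟨j, hj, y, hy, rfl⟩
  have hΛ0 : ∀ n : ℤ, 0 ≤ Λ n := fun n =>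
    le_trans (abs_nonneg _) (hmem n 0 hN (n:ℝ) (Set.mem_Icc.mpr ⟨by linarith, by linarith⟩))
  have hlip : ∀ n : ℤ, ∀ j < N, ∀ s ∈ Set.Icc ((n:ℝ) - 1/4) ((n:ℝ) + 1/4),
      |F j s - F j (n:ℝ)| ≤ Λ n * |s - (n:ℝ)| := by
    intro n j hj s hs
    have hdiff : DifferentiableOn ℝ (F j) (Set.Icc ((n:ℝ) - 1/4) ((n:ℝ) + 1/4)) :=
      (hFC1 j hj n).differentiableOn one_ne_zero
    have := Convex.norm_image_sub_le_of_norm_derivWithin_le hdiff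
      (fun y hy => by rw [Real.norm_eq_abs]; exact hmem n j hj y hy)
      (convex_Icc _ _) (show (n:ℝ) ∈ Set.Icc ((n:ℝ) - 1/4) ((n:ℝ) + 1/4) from
        Set.mem_Icc.mpr ⟨by linarith, by linarith⟩) hs
    simpa [Real.norm_eq_abs] using this
  -- support finsets
  set A : Finset ℤ := ha.toFinset with hA
  set B : Finset ℤ := hb.toFinset with hB
  have haA : ∀ m : ℤ, m ∉ A → a m = 0 := fun m hm =>
    Function.notMem_support.mp fun h => hm (ha.mem_toFinset.mpr h)
  have hbB : ∀ m : ℤ, m ∉ B → b m = 0 := fun m hm =>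
    Function.notMem_support.mp fun h => hm (hb.mem_toFinset.mpr h)
  intro x
  rw [aux_pmap_single phi0 phi0_vanish _ x, aux_pmap_single phi1 phi1_vanish _ x]
  set k₀ : ℤ := round x with hk₀
  set t : ℝ := x - (k₀ : ℝ) with ht
  rw [smul_eq_mul, smul_eq_mul]
  by_cases hT : |t| ≤ 1/4
  · -- main case
    set r : ℝ := 1/4 - |t| with hr
    have hr0 : 0 ≤ r := by rw [hr]; linarith [abs_nonneg t]
    have hphi0 : phi0 t = 2 * r := by
      rw [phi0, Set.indicator_of_mem (Set.mem_Icc.mpr (abs_le.mp hT))]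
    have hphi1 : phi1 t = r ^ 2 := by
      rw [phi1, Set.indicator_of_mem (Set.mem_Icc.mpr (abs_le.mp hT))]
    rw [hphi0, hphi1]
    -- per-n estimate
    have claimB : ∀ j < N, ∀ n : ℤ,
        |(∫ s in Set.Icc ((n:ℝ) - r) ((n:ℝ) + r), F j s) - 2 * r * F j (n:ℝ)| ≤ r ^ 2 * Λ n := by
      intro j hj n
      have hrle : r ≤ 1/4 := by rw [hr]; linarith [abs_nonneg t]
      have hJK : Set.Icc ((n:ℝ) - r) ((n:ℝ) + r) ⊆ Set.Icc ((n:ℝ) - 1/4) ((n:ℝ) + 1/4) :=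
        Set.Icc_subset_Icc (by linarith) (by linarith)
      have hvol : volume (Set.Icc ((n:ℝ) - r) ((n:ℝ) + r)) = ENNReal.ofReal (2 * r) := by
        rw [Real.volume_Icc]; congr 1; ring
      have hfin : volume (Set.Icc ((n:ℝ) - r) ((n:ℝ) + r)) < ⊤ := by
        rw [hvol]; exact ENNReal.ofReal_lt_top
      have hintF : IntegrableOn (F j) (Set.Icc ((n:ℝ) - r) ((n:ℝ) + r)) volume :=
        (hFL1 j hj).integrableOn
      have hintC : IntegrableOn (fun _ : ℝ => F j (n:ℝ)) (Set.Icc ((n:ℝ) - r) ((n:ℝ) + r)) volume :=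
        integrableOn_const hfin.ne
      have hconst : (∫ _ in Set.Icc ((n:ℝ) - r) ((n:ℝ) + r), F j (n:ℝ)) = 2 * r * F j (n:ℝ) := by
        rw [setIntegral_const, measureReal_def, hvol, ENNReal.toReal_ofReal (by linarith), smul_eq_mul]
      rw [← hconst, ← integral_sub hintF hintC]
      have h1 : |∫ s in Set.Icc ((n:ℝ) - r) ((n:ℝ) + r), (F j s - F j (n:ℝ))|
          ≤ ∫ s in Set.Icc ((n:ℝ) - r) ((n:ℝ) + r), |F j s - F j (n:ℝ)| := by
        simpa [Real.norm_eq_abs] using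
          norm_integral_le_integral_norm (μ := volume.restrict (Set.Icc ((n:ℝ) - r) ((n:ℝ) + r)))
            (fun s => F j s - F j (n:ℝ))
      have h2 : (∫ s in Set.Icc ((n:ℝ) - r) ((n:ℝ) + r), |F j s - F j (n:ℝ)|)
          ≤ ∫ s in Set.Icc ((n:ℝ) - r) ((n:ℝ) + r), Λ n * |s - (n:ℝ)| := by
        refine setIntegral_mono_on ((hintF.sub hintC).abs) ?_ measurableSet_Icc ?_
        · exact (continuous_const.mul (continuous_id.sub continuous_const).abs).integrableOn_Icc
        · intro s hs; exact hlip n j hj s (hJK hs)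
      have h3 : (∫ s in Set.Icc ((n:ℝ) - r) ((n:ℝ) + r), Λ n * |s - (n:ℝ)|) = Λ n * r^2 := by
        rw [integral_const_mul, integral_abs_sub (n:ℝ) r hr0]
      rw [h3] at h2
      calc |∫ s in Set.Icc ((n:ℝ) - r) ((n:ℝ) + r), (F j s - F j (n:ℝ))|
          ≤ Λ n * r^2 := le_trans h1 h2
        _ = r^2 * Λ n := by ring
    -- tsum reductions
    have hinj : ∀ m ∈ A, ∀ m' ∈ A, m - k₀ = m' - k₀ → m = m' := fun m _ m' _ h => by omega
    have htsum1 : ∀ j : ℕ, (∑' n : ℤ, a (k₀ + n) * b (k₀ - n) * (F j (n:ℝ) : ℂ))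
        = ∑ m ∈ A, a m * b (2*k₀ - m) * (F j ((m - k₀ : ℤ) : ℝ) : ℂ) := by
      intro j
      rw [tsum_eq_sum (s := A.image (fun m => m - k₀))
        (fun n hn => by
          have hna : k₀ + n ∉ A := fun h => hn (Finset.mem_image.mpr ⟨k₀ + n, h, by ring⟩)
          rw [haA _ hna, zero_mul, zero_mul]),
        Finset.sum_image hinj]
      exact Finset.sum_congr rfl fun m hm => by
        rw [show k₀ + (m - k₀) = m by ring, show k₀ - (m - k₀) = 2*k₀ - m by ring]
    have htsum2 : (∑' k : ℤ, Norm.norm (a (k₀ + k)) * Norm.norm (b (k₀ - k)) * Λ k)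
        = ∑ m ∈ A, Norm.norm (a m) * Norm.norm (b (2*k₀ - m)) * Λ (m - k₀) := by
      rw [tsum_eq_sum (s := A.image (fun m => m - k₀))
        (fun n hn => by
          have hna : k₀ + n ∉ A := fun h => hn (Finset.mem_image.mpr ⟨k₀ + n, h, by ring⟩)
          rw [haA _ hna, norm_zero, zero_mul, zero_mul]),
        Finset.sum_image hinj]
      exact Finset.sum_congr rfl fun m hm => by
        rw [show k₀ + (m - k₀) = m by ring, show k₀ - (m - k₀) = 2*k₀ - m by ring]
    -- the integral identity
    have claimA : ∀ j < N, (∫ y : ℝ, Pmap chiI a (x + y) * Pmap chiI b (x - y) * (F j y : ℂ))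
        = ∑ m ∈ A, a m * b (2*k₀ - m)
            * ((∫ s in Set.Icc (((m - k₀ : ℤ) : ℝ) - r) (((m - k₀ : ℤ) : ℝ) + r), F j s : ℝ) : ℂ) := by
      intro j hj
      have hPa : ∀ u : ℝ, Pmap chiI a u = ∑ m ∈ A, chiI (u - (m:ℝ)) • a m := fun u =>
        tsum_eq_sum fun m hm => by rw [haA m hm, smul_zero]
      have hPb : ∀ u : ℝ, Pmap chiI b u = ∑ l ∈ B, chiI (u - (l:ℝ)) • b l := fun u =>
        tsum_eq_sum fun l hl => by rw [hbB l hl, smul_zero]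
      set S : ℤ → ℤ → Set ℝ := fun m l =>
        Set.Icc (max ((m:ℝ) - x) (x - (l:ℝ)) - 1/4) (min ((m:ℝ) - x) (x - (l:ℝ)) + 1/4) with hS
      have hkey : ∀ (m l : ℤ) (y : ℝ),
          chiI (x + y - (m:ℝ)) * chiI (x - y - (l:ℝ)) * F j y = (S m l).indicator (F j) y := by
        intro m l y
        by_cases hy : y ∈ S m l
        · have h : max ((m:ℝ) - x) (x - (l:ℝ)) - 1/4 ≤ y ∧ y ≤ min ((m:ℝ) - x) (x - (l:ℝ)) + 1/4 := by
            simpa only [hS, Set.mem_Icc] using hy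
          have h1 := le_max_left ((m:ℝ) - x) (x - (l:ℝ))
          have h2 := le_max_right ((m:ℝ) - x) (x - (l:ℝ))
          have h3 := min_le_left ((m:ℝ) - x) (x - (l:ℝ))
          have h4 := min_le_right ((m:ℝ) - x) (x - (l:ℝ))
          have c1 : chiI (x + y - (m:ℝ)) = 1 := by
            rw [chiI, Set.indicator_of_mem
              (Set.mem_Icc.mpr ⟨by linarith [h.1, h.2], by linarith [h.1, h.2]⟩)]
          have c2 : chiI (x - y - (l:ℝ)) = 1 := by
            rw [chiI, Set.indicator_of_mem
              (Set.mem_Icc.mpr ⟨by linarith [h.1, h.2], by linarith [h.1, h.2]⟩)]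
          rw [Set.indicator_of_mem hy, c1, c2]; ring
        · rw [Set.indicator_of_notMem hy]
          have hy' : ¬(max ((m:ℝ) - x) (x - (l:ℝ)) - 1/4 ≤ y
              ∧ y ≤ min ((m:ℝ) - x) (x - (l:ℝ)) + 1/4) := by
            simpa only [hS, Set.mem_Icc] using hy
          rw [not_and_or] at hy'
          rcases hy' with h | h
          · push_neg at h
            rcases max_cases ((m:ℝ) - x) (x - (l:ℝ)) with ⟨he, _⟩ | ⟨he, _⟩ <;> rw [he] at h
            · have c1 : chiI (x + y - (m:ℝ)) = 0 := by
                rw [chiI]; apply Set.indicator_of_notMem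
                intro hc; rw [Set.mem_Icc] at hc; have := hc.1; linarith
              rw [c1]; ring
            · have c2 : chiI (x - y - (l:ℝ)) = 0 := by
                rw [chiI]; apply Set.indicator_of_notMem
                intro hc; rw [Set.mem_Icc] at hc; have := hc.2; linarith
              rw [c2]; ring
          · push_neg at h
            rcases min_cases ((m:ℝ) - x) (x - (l:ℝ)) with ⟨he, _⟩ | ⟨he, _⟩ <;> rw [he] at h
            · have c1 : chiI (x + y - (m:ℝ)) = 0 := by
                rw [chiI]; apply Set.indicator_of_notMem
                intro hc; rw [Set.mem_Icc] at hc; have := hc.2; linarith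
              rw [c1]; ring
            · have c2 : chiI (x - y - (l:ℝ)) = 0 := by
                rw [chiI]; apply Set.indicator_of_notMem
                intro hc; rw [Set.mem_Icc] at hc; have := hc.1; linarith
              rw [c2]; ring
      have hpoint : ∀ y : ℝ, Pmap chiI a (x + y) * Pmap chiI b (x - y) * (F j y : ℂ)
          = ∑ m ∈ A, ∑ l ∈ B, (((S m l).indicator (F j) y : ℝ) : ℂ) * (a m * b l) := by
        intro y
        rw [hPa (x + y), hPb (x - y), Finset.sum_mul_sum, Finset.sum_mul]
        refine Finset.sum_congr rfl fun m hm => ?_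
        rw [Finset.sum_mul]
        refine Finset.sum_congr rfl fun l hl => ?_
        rw [← hkey m l y, Complex.real_smul, Complex.real_smul]
        push_cast
        ring
      have hint : ∀ m l : ℤ,
          Integrable (fun y => (((S m l).indicator (F j) y : ℝ) : ℂ) * (a m * b l)) volume := by
        intro m l
        have : MeasurableSet (S m l) := by simp only [hS]; exact measurableSet_Icc
        exact (((hFL1 j hj).indicator this).ofReal).mul_const _
      calc (∫ y : ℝ, Pmap chiI a (x + y) * Pmap chiI b (x - y) * (F j y : ℂ))
          = ∫ y : ℝ, ∑ m ∈ A, ∑ l ∈ B, (((S m l).indicator (F j) y : ℝ) : ℂ) * (a m * b l) :=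
            integral_congr_ae (Eventually.of_forall hpoint)
        _ = ∑ m ∈ A, ∑ l ∈ B, ∫ y : ℝ, (((S m l).indicator (F j) y : ℝ) : ℂ) * (a m * b l) := by
            rw [integral_finset_sum A fun m _ => integrable_finset_sum B fun l _ => hint m l]
            exact Finset.sum_congr rfl fun m _ => integral_finset_sum B fun l _ => hint m l
        _ = ∑ m ∈ A, ∑ l ∈ B, ((∫ y in S m l, F j y : ℝ) : ℂ) * (a m * b l) := by
            refine Finset.sum_congr rfl fun m _ => Finset.sum_congr rfl fun l _ => ?_
            simp_rw [← Complex.real_smul]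
            rw [integral_smul_const,
              integral_indicator (by simp only [hS]; exact measurableSet_Icc)]
        _ = ∑ m ∈ A, ((∫ y in S m (2*k₀ - m), F j y : ℝ) : ℂ) * (a m * b (2*k₀ - m)) := by
            refine Finset.sum_congr rfl fun m hm => ?_
            refine Finset.sum_eq_single (2*k₀ - m) (fun l hl hlne => ?_) (fun hnb => ?_)
            · have hzero : (∫ y in S m l, F j y) = 0 := by
                have hvol0 : volume (S m l) = 0 := by
                  simp only [hS]
                  rw [Real.volume_Icc]
                  apply ENNReal.ofReal_eq_zero.mpr
                  have hd : (1:ℝ) ≤ |((m + l - 2*k₀ : ℤ) : ℝ)| := by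
                    rw [← Int.cast_abs]
                    exact_mod_cast Int.one_le_abs (by omega)
                  have h2t : |2*t| ≤ 1/2 := by rw [abs_mul, abs_two]; linarith
                  have heq : ((m:ℝ) - x) - (x - (l:ℝ)) = ((m + l - 2*k₀ : ℤ) : ℝ) - 2*t := by
                    rw [ht]; push_cast; ring
                  have habs : 1/2 ≤ |((m:ℝ) - x) - (x - (l:ℝ))| := by
                    rw [heq]
                    have := abs_sub_abs_le_abs_sub ((m + l - 2*k₀ : ℤ) : ℝ) (2*t)
                    linarith
                  rw [abs_sub_comm ((m:ℝ) - x) (x - (l:ℝ))] at habs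
                  have hms := max_sub_min_eq_abs ((m:ℝ) - x) (x - (l:ℝ))
                  linarith
                rw [show volume.restrict (S m l) = 0 from Measure.restrict_eq_zero.mpr hvol0]
                exact integral_zero_measure _
              rw [hzero]; simp
            · rw [hbB _ hnb]; simp
        _ = ∑ m ∈ A, a m * b (2*k₀ - m)
            * ((∫ s in Set.Icc (((m - k₀ : ℤ) : ℝ) - r) (((m - k₀ : ℤ) : ℝ) + r), F j s : ℝ) : ℂ) := by
            refine Finset.sum_congr rfl fun m hm => ?_
            have hSm : S m (2*k₀ - m)
                = Set.Icc (((m - k₀ : ℤ) : ℝ) - r) (((m - k₀ : ℤ) : ℝ) + r) := by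
              simp only [hS]
              have e1 : (m:ℝ) - x = ((m:ℝ) - (k₀:ℝ)) - t := by rw [ht]; ring
              have e2 : x - ((2*k₀ - m : ℤ) : ℝ) = ((m:ℝ) - (k₀:ℝ)) + t := by
                rw [ht]; push_cast; ring
              rw [e1, e2]
              have e3 : max (((m:ℝ) - (k₀:ℝ)) - t) (((m:ℝ) - (k₀:ℝ)) + t)
                  = ((m:ℝ) - (k₀:ℝ)) + |t| := by
                rcases abs_cases t with ⟨h1, h2⟩ | ⟨h1, h2⟩
                · rw [h1, max_eq_right (by linarith)]
                · rw [h1, max_eq_left (by linarith)]; ring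
              have e4 : min (((m:ℝ) - (k₀:ℝ)) - t) (((m:ℝ) - (k₀:ℝ)) + t)
                  = ((m:ℝ) - (k₀:ℝ)) - |t| := by
                rcases abs_cases t with ⟨h1, h2⟩ | ⟨h1, h2⟩
                · rw [h1, min_eq_left (by linarith)]
                · rw [h1, min_eq_right (by linarith)]; ring
              rw [e3, e4]
              congr 1 <;> push_cast <;> rw [hr] <;> ring
            rw [hSm]; ring
    -- nonnegativity facts
    have hSig0 : 0 ≤ ∑' k : ℤ, Norm.norm (a (k₀ + k)) * Norm.norm (b (k₀ - k)) * Λ k :=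
      tsum_nonneg fun k => mul_nonneg
        (mul_nonneg (norm_nonneg _) (norm_nonneg _)) (hΛ0 k)
    have hV0 : 0 ≤ ⨆ j, ⨆ _ : j ∈ Finset.range N,
        Norm.norm (∫ y : ℝ, Pmap chiI a (x + y) * Pmap chiI b (x - y) * (F j y : ℂ)) :=
      Real.iSup_nonneg fun j => Real.iSup_nonneg fun _ => norm_nonneg _
    have hRHS0 : 0 ≤ (⨆ j, ⨆ _ : j ∈ Finset.range N,
        Norm.norm (∫ y : ℝ, Pmap chiI a (x + y) * Pmap chiI b (x - y) * (F j y : ℂ)))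
        + r^2 * ∑' k : ℤ, Norm.norm (a (k₀ + k)) * Norm.norm (b (k₀ - k)) * Λ k :=
      add_nonneg hV0 (mul_nonneg (sq_nonneg r) hSig0)
    rw [Real.mul_iSup_of_nonneg (by linarith : (0:ℝ) ≤ 2*r)]
    refine Real.iSup_le (fun j => ?_) hRHS0
    rw [Real.mul_iSup_of_nonneg (by linarith : (0:ℝ) ≤ 2*r)]
    refine Real.iSup_le (fun hj' => ?_) hRHS0
    have hj : j < N := Finset.mem_range.mp hj'
    rw [htsum1 j]
    have e5 : 2*r * Norm.norm (∑ m ∈ A, a m * b (2*k₀ - m) * (F j ((m - k₀ : ℤ) : ℝ) : ℂ))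
        = Norm.norm (∑ m ∈ A, a m * b (2*k₀ - m) * ((2*r*F j ((m - k₀ : ℤ) : ℝ) : ℝ) : ℂ)) := by
      rw [show (∑ m ∈ A, a m * b (2*k₀ - m) * ((2*r*F j ((m - k₀ : ℤ) : ℝ) : ℝ) : ℂ))
          = ((2*r : ℝ) : ℂ) * ∑ m ∈ A, a m * b (2*k₀ - m) * (F j ((m - k₀ : ℤ) : ℝ) : ℂ) from by
        rw [Finset.mul_sum]; exact Finset.sum_congr rfl fun m _ => by push_cast; ring]
      rw [norm_mul, Complex.norm_real, Real.norm_eq_abs, abs_of_nonneg (by linarith : (0:ℝ) ≤ 2*r)]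
    have e6 : (∑ m ∈ A, a m * b (2*k₀ - m) * ((2*r*F j ((m - k₀ : ℤ) : ℝ) : ℝ) : ℂ))
        = (∫ y : ℝ, Pmap chiI a (x + y) * Pmap chiI b (x - y) * (F j y : ℂ))
          - ∑ m ∈ A, a m * b (2*k₀ - m)
            * (((∫ s in Set.Icc (((m - k₀ : ℤ) : ℝ) - r) (((m - k₀ : ℤ) : ℝ) + r), F j s)
                - 2*r*F j ((m - k₀ : ℤ) : ℝ) : ℝ) : ℂ) := by
      rw [claimA j hj, ← Finset.sum_sub_distrib]
      exact Finset.sum_congr rfl fun m _ => by push_cast; ring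
    have e7 : Norm.norm (∑ m ∈ A, a m * b (2*k₀ - m)
          * (((∫ s in Set.Icc (((m - k₀ : ℤ) : ℝ) - r) (((m - k₀ : ℤ) : ℝ) + r), F j s)
              - 2*r*F j ((m - k₀ : ℤ) : ℝ) : ℝ) : ℂ))
        ≤ r^2 * ∑ m ∈ A, Norm.norm (a m) * Norm.norm (b (2*k₀ - m)) * Λ (m - k₀) := by
      refine le_trans (norm_sum_le _ _) ?_
      rw [Finset.mul_sum]
      refine Finset.sum_le_sum fun m _ => ?_
      rw [norm_mul, norm_mul, Complex.norm_real, Real.norm_eq_abs]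
      have hB := claimB j hj (m - k₀)
      have hab : 0 ≤ Norm.norm (a m) * Norm.norm (b (2*k₀ - m)) :=
        mul_nonneg (norm_nonneg _) (norm_nonneg _)
      calc Norm.norm (a m) * Norm.norm (b (2*k₀ - m))
            * |(∫ s in Set.Icc (((m - k₀ : ℤ) : ℝ) - r) (((m - k₀ : ℤ) : ℝ) + r), F j s)
                - 2*r*F j ((m - k₀ : ℤ) : ℝ)|
          ≤ Norm.norm (a m) * Norm.norm (b (2*k₀ - m)) * (r^2 * Λ (m - k₀)) :=
            mul_le_mul_of_nonneg_left hB hab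
        _ = r^2 * (Norm.norm (a m) * Norm.norm (b (2*k₀ - m)) * Λ (m - k₀)) := by ring
    have hsup : Norm.norm (∫ y : ℝ, Pmap chiI a (x + y) * Pmap chiI b (x - y) * (F j y : ℂ))
        ≤ ⨆ j, ⨆ _ : j ∈ Finset.range N,
            Norm.norm (∫ y : ℝ, Pmap chiI a (x + y) * Pmap chiI b (x - y) * (F j y : ℂ)) := by
      have hpos := ciSup_pos (f := fun _ : j ∈ Finset.range N =>
        Norm.norm (∫ y : ℝ, Pmap chiI a (x + y) * Pmap chiI b (x - y) * (F j y : ℂ))) hj'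
      refine le_trans hpos.symm.le ?_
      exact le_ciSup (bddAbove_range_biSup N
        (fun j => Norm.norm (∫ y : ℝ, Pmap chiI a (x + y) * Pmap chiI b (x - y) * (F j y : ℂ)))) j
    calc 2*r * Norm.norm (∑ m ∈ A, a m * b (2*k₀ - m) * (F j ((m - k₀ : ℤ) : ℝ) : ℂ))
        = Norm.norm (∑ m ∈ A, a m * b (2*k₀ - m) * ((2*r*F j ((m - k₀ : ℤ) : ℝ) : ℝ) : ℂ)) := e5
      _ ≤ Norm.norm (∫ y : ℝ, Pmap chiI a (x + y) * Pmap chiI b (x - y) * (F j y : ℂ))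
          + Norm.norm (∑ m ∈ A, a m * b (2*k₀ - m)
            * (((∫ s in Set.Icc (((m - k₀ : ℤ) : ℝ) - r) (((m - k₀ : ℤ) : ℝ) + r), F j s)
                - 2*r*F j ((m - k₀ : ℤ) : ℝ) : ℝ) : ℂ)) := by
          rw [e6]
          exact (norm_sub_le _ _)
      _ ≤ (⨆ j, ⨆ _ : j ∈ Finset.range N,
            Norm.norm (∫ y : ℝ, Pmap chiI a (x + y) * Pmap chiI b (x - y) * (F j y : ℂ)))
          + r^2 * ∑ m ∈ A, Norm.norm (a m) * Norm.norm (b (2*k₀ - m)) * Λ (m - k₀) :=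
          add_le_add hsup e7
      _ = (⨆ j, ⨆ _ : j ∈ Finset.range N,
            Norm.norm (∫ y : ℝ, Pmap chiI a (x + y) * Pmap chiI b (x - y) * (F j y : ℂ)))
          + r^2 * ∑' k : ℤ, Norm.norm (a (k₀ + k)) * Norm.norm (b (k₀ - k)) * Λ k := by
          rw [htsum2]
  · -- degenerate case
    push_neg at hT
    rw [phi0_vanish t hT.le, phi1_vanish t hT.le]
    simp only [zero_mul, add_zero]
    exact Real.iSup_nonneg fun j => Real.iSup_nonneg fun _ => norm_nonneg _
end
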